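/- The dwarfed d-cube D̄ = {x ∈ ℝ^d : (∀ i, 0 ≤ x i ∧ x i ≤ 1) ∧ Σ_i x i ≤ 3/2} has exactly d² + 1 vertices for d ≥ 2: its set of extreme points is exactly {0} ∪ {e i : i ∈ Fin d} ∪ {e i + (1/2) • e j : i j ∈ Fin d, i ≠ j}, where e i denotes the i-th standard basis vector, and this set has cardinality d² + 1. -/

import Mathlib

private lemma combo_eq_of_le' {a b y z c : ℝ} (ha : 0 < a) (hb : 0 < b) (hab : a + b = 1)
    (hy : y ≤ c) (hz : z ≤ c) (h : a * y + b * z = c) : y = c ∧ z = c := by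
  have h1 : b * z ≤ b * c := mul_le_mul_of_nonneg_left hz hb.le
  have h2 : a * y ≤ a * c := mul_le_mul_of_nonneg_left hy ha.le
  have hc : a * c + b * c = c := by linear_combination c * hab
  have hy' : a * c ≤ a * y := by linarith
  have hz' : b * c ≤ b * z := by linarith
  exact ⟨le_antisymm hy (le_of_mul_le_mul_left hy' ha),
    le_antisymm hz (le_of_mul_le_mul_left hz' hb)⟩

private lemma combo_eq_of_ge' {a b y z c : ℝ} (ha : 0 < a) (hb : 0 < b) (hab : a + b = 1)
    (hy : c ≤ y) (hz : c ≤ z) (h : a * y + b * z = c) : y = c ∧ z = c := by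
  obtain ⟨h1, h2⟩ := combo_eq_of_le' ha hb hab (neg_le_neg hy) (neg_le_neg hz) (by linarith)
  constructor <;> linarith

private lemma extreme_perturb' {d : ℕ} {D : Set (EuclideanSpace ℝ (Fin d))}
    {x w : EuclideanSpace ℝ (Fin d)} (hx : x ∈ Set.extremePoints ℝ D)
    (h1 : x + w ∈ D) (h2 : x - w ∈ D) : w = 0 := by
  rw [mem_extremePoints] at hx
  obtain ⟨hxD, h⟩ := hx
  have hseg : x ∈ openSegment ℝ (x + w) (x - w) :=
    ⟨1/2, 1/2, by norm_num, by norm_num, by norm_num, by module⟩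
  have h0 : x + w = x := (h _ h1 _ h2 hseg).1
  have : x + w = x + 0 := by rw [add_zero]; exact h0
  exact add_left_cancel this

/-- For `d ≥ 2`, the dwarfed `d`-cube
`D̄ = {x ∈ [0,1]^d : Σ xᵢ ≤ 3/2}` has vertex set
`{0} ∪ {eᵢ} ∪ {eᵢ + ½ eⱼ : i ≠ j}`, of cardinality `d² + 1`. -/
theorem stmt_10 (d : ℕ) (hd : 2 ≤ d)
    (D : Set (EuclideanSpace ℝ (Fin d)))
    (hD : D = {x : EuclideanSpace ℝ (Fin d) |
      (∀ i, 0 ≤ x i ∧ x i ≤ 1) ∧ ∑ i, x i ≤ 3 / 2}) :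
    Set.extremePoints ℝ D =
      ({0} ∪ {x | ∃ i : Fin d, x = EuclideanSpace.single i (1 : ℝ)} ∪
        {x | ∃ i j : Fin d, i ≠ j ∧
          x = EuclideanSpace.single i (1 : ℝ) +
            (1 / 2 : ℝ) • EuclideanSpace.single j (1 : ℝ)}) ∧
      (Set.extremePoints ℝ D).ncard = d ^ 2 + 1 := by
  classical
  have hDmem : ∀ x : EuclideanSpace ℝ (Fin d),
      x ∈ D ↔ (∀ i, 0 ≤ x i ∧ x i ≤ 1) ∧ ∑ i, x i ≤ 3 / 2 := by
    intro x; rw [hD]; exact Iff.rfl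
  have hcoord : ∀ {y z v : EuclideanSpace ℝ (Fin d)} {a b : ℝ},
      a • y + b • z = v → ∀ k, a * y k + b * z k = v k := by
    intro y z v a b h k
    have := congrArg (· k) h
    simpa using this
  -- membership of the candidate vertices
  have h0D : (0 : EuclideanSpace ℝ (Fin d)) ∈ D := by
    rw [hDmem]
    refine ⟨fun i => ?_, ?_⟩ <;> simp <;> norm_num
  have hfD : ∀ i : Fin d, EuclideanSpace.single i (1 : ℝ) ∈ D := by
    intro i; rw [hDmem]
    refine ⟨fun k => ?_, ?_⟩
    · simp only [EuclideanSpace.single_apply]; split <;> norm_num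
    · simp [EuclideanSpace.single_apply]; norm_num
  have hgD : ∀ i j : Fin d, i ≠ j →
      EuclideanSpace.single i (1 : ℝ) + (1 / 2 : ℝ) • EuclideanSpace.single j (1 : ℝ) ∈ D := by
    intro i j hij; rw [hDmem]
    constructor
    · intro k
      simp only [PiLp.add_apply, PiLp.smul_apply, EuclideanSpace.single_apply, smul_eq_mul]
      rcases eq_or_ne k i with rfl | hki
      · rw [if_pos rfl, if_neg hij]; norm_num
      · rw [if_neg hki]
        rcases eq_or_ne k j with rfl | hkj
        · rw [if_pos rfl]; norm_num
        · rw [if_neg hkj]; norm_num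
    · simp only [PiLp.add_apply, PiLp.smul_apply, EuclideanSpace.single_apply, smul_eq_mul]
      rw [Finset.sum_add_distrib]
      simp [mul_ite]
      norm_num
  -- the candidates are extreme
  have h0ext : (0 : EuclideanSpace ℝ (Fin d)) ∈ Set.extremePoints ℝ D := by
    rw [mem_extremePoints]
    refine ⟨h0D, ?_⟩
    rintro y hy z hz ⟨a, b, ha, hb, hab, habs⟩
    have hyb := ((hDmem y).1 hy).1
    have hzb := ((hDmem z).1 hz).1
    have key : ∀ k, y k = 0 ∧ z k = 0 := by
      intro k
      have h := hcoord habs k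
      have h0 : (0 : EuclideanSpace ℝ (Fin d)) k = 0 := rfl
      rw [h0] at h
      exact combo_eq_of_ge' ha hb hab (hyb k).1 (hzb k).1 h
    constructor <;> ext k
    · simp [(key k).1]
    · simp [(key k).2]
  have hfext : ∀ i : Fin d, EuclideanSpace.single i (1 : ℝ) ∈ Set.extremePoints ℝ D := by
    intro i
    rw [mem_extremePoints]
    refine ⟨hfD i, ?_⟩
    rintro y hy z hz ⟨a, b, ha, hb, hab, habs⟩
    have hyb := ((hDmem y).1 hy).1
    have hzb := ((hDmem z).1 hz).1
    have keyi : y i = 1 ∧ z i = 1 := by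
      have h := hcoord habs i
      rw [EuclideanSpace.single_apply, if_pos rfl] at h
      exact combo_eq_of_le' ha hb hab (hyb i).2 (hzb i).2 h
    have keyk : ∀ k, k ≠ i → y k = 0 ∧ z k = 0 := by
      intro k hk
      have h := hcoord habs k
      rw [EuclideanSpace.single_apply, if_neg hk] at h
      exact combo_eq_of_ge' ha hb hab (hyb k).1 (hzb k).1 h
    constructor <;> ext k
    · rcases eq_or_ne k i with rfl | hk
      · simp [keyi.1]
      · simp [(keyk k hk).1, hk]
    · rcases eq_or_ne k i with rfl | hk
      · simp [keyi.2]
      · simp [(keyk k hk).2, hk]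
  have hgext : ∀ i j : Fin d, i ≠ j →
      (EuclideanSpace.single i (1 : ℝ) + (1 / 2 : ℝ) • EuclideanSpace.single j (1 : ℝ))
        ∈ Set.extremePoints ℝ D := by
    intro i j hij
    rw [mem_extremePoints]
    refine ⟨hgD i j hij, ?_⟩
    rintro y hy z hz ⟨a, b, ha, hb, hab, habs⟩
    obtain ⟨hyb, hys⟩ := (hDmem y).1 hy
    obtain ⟨hzb, hzs⟩ := (hDmem z).1 hz
    have hv : ∀ k, (EuclideanSpace.single i (1 : ℝ) +
        (1 / 2 : ℝ) • EuclideanSpace.single j (1 : ℝ)) k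
        = (if k = i then 1 else 0) + 1 / 2 * (if k = j then 1 else 0) := by
      intro k; simp
    have keyi : y i = 1 ∧ z i = 1 := by
      have h := hcoord habs i
      rw [hv, if_pos rfl, if_neg hij] at h
      norm_num at h
      exact combo_eq_of_le' ha hb hab (hyb i).2 (hzb i).2 h
    have keyk : ∀ k, k ≠ i → k ≠ j → y k = 0 ∧ z k = 0 := by
      intro k hki hkj
      have h := hcoord habs k
      rw [hv, if_neg hki, if_neg hkj] at h
      norm_num at h
      exact combo_eq_of_ge' ha hb hab (hyb k).1 (hzb k).1 h
    have hsumu : ∀ u : EuclideanSpace ℝ (Fin d), u i = 1 →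
        (∀ k, k ≠ i → k ≠ j → u k = 0) → ∑ k, u k = 1 + u j := by
      intro u hui hu0
      have hsub : ∑ k ∈ ({i, j} : Finset (Fin d)), u k = ∑ k, u k := by
        apply Finset.sum_subset (Finset.subset_univ _)
        intro k _ hk
        simp only [Finset.mem_insert, Finset.mem_singleton] at hk
        push_neg at hk
        exact hu0 k hk.1 hk.2
      rw [← hsub, Finset.sum_pair hij, hui]
    have hyj : y j ≤ 1 / 2 := by
      have h1 := hsumu y keyi.1 (fun k h1 h2 => (keyk k h1 h2).1)
      rw [h1] at hys; linarith
    have hzj : z j ≤ 1 / 2 := by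
      have h1 := hsumu z keyi.2 (fun k h1 h2 => (keyk k h1 h2).2)
      rw [h1] at hzs; linarith
    have keyj : y j = 1 / 2 ∧ z j = 1 / 2 := by
      have h := hcoord habs j
      rw [hv, if_neg (Ne.symm hij), if_pos rfl] at h
      norm_num at h
      exact combo_eq_of_le' ha hb hab hyj hzj h
    constructor <;> ext k
    · rw [hv]
      rcases eq_or_ne k i with rfl | hki
      · simp [keyi.1, hij]
      rcases eq_or_ne k j with rfl | hkj
      · simp [keyj.1, Ne.symm hij]
      · simp [(keyk k hki hkj).1, hki, hkj]
    · rw [hv]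
      rcases eq_or_ne k i with rfl | hki
      · simp [keyi.2, hij]
      rcases eq_or_ne k j with rfl | hkj
      · simp [keyj.2, Ne.symm hij]
      · simp [(keyk k hki hkj).2, hki, hkj]
  -- forward direction
  have hforward : ∀ x ∈ Set.extremePoints ℝ D,
      x = 0 ∨ (∃ i : Fin d, x = EuclideanSpace.single i (1 : ℝ)) ∨
      (∃ i j : Fin d, i ≠ j ∧ x = EuclideanSpace.single i (1 : ℝ) +
        (1 / 2 : ℝ) • EuclideanSpace.single j (1 : ℝ)) := by
    intro x hx
    obtain ⟨hxb, hxs⟩ := (hDmem x).1 hx.1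
    have hfrac : ∀ i j : Fin d, i ≠ j → 0 < x i → x i < 1 → 0 < x j → x j < 1 → False := by
      intro i j hij hi0 hi1 hj0 hj1
      set ε : ℝ := min (min (x i) (1 - x i)) (min (x j) (1 - x j)) with hεdef
      have hε1 : ε ≤ x i := le_trans (min_le_left _ _) (min_le_left _ _)
      have hε2 : ε ≤ 1 - x i := le_trans (min_le_left _ _) (min_le_right _ _)
      have hε3 : ε ≤ x j := le_trans (min_le_right _ _) (min_le_left _ _)
      have hε4 : ε ≤ 1 - x j := le_trans (min_le_right _ _) (min_le_right _ _)
      have hε0 : 0 < ε := lt_min (lt_min hi0 (by linarith)) (lt_min hj0 (by linarith))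
      set w : EuclideanSpace ℝ (Fin d) :=
        ε • (EuclideanSpace.single i (1 : ℝ) - EuclideanSpace.single j (1 : ℝ)) with hwdef
      have hw_i : w i = ε := by simp [hwdef, hij]
      have hw_j : w j = -ε := by simp [hwdef, Ne.symm hij]
      have hw_o : ∀ k, k ≠ i → k ≠ j → w k = 0 := by
        intro k h1 h2; simp [hwdef, h1, h2]
      have hsw : ∑ k, w k = 0 := by
        have hterm : ∀ k, w k = ε * (if k = i then 1 else 0)
            - ε * (if k = j then 1 else 0) := by
          intro k; simp [hwdef, mul_sub]
        rw [Finset.sum_congr rfl fun k _ => hterm k, Finset.sum_sub_distrib]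
        simp [mul_ite]
      have hmem1 : x + w ∈ D := by
        rw [hDmem]
        refine ⟨fun k => ?_, ?_⟩
        · have hax : (x + w) k = x k + w k := rfl
          rw [hax]
          rcases eq_or_ne k i with rfl | hki
          · rw [hw_i]; constructor <;> linarith
          rcases eq_or_ne k j with rfl | hkj
          · rw [hw_j]; constructor <;> linarith
          · rw [hw_o k hki hkj]
            constructor <;> linarith [(hxb k).1, (hxb k).2]
        · have hax : ∑ k, (x + w) k = ∑ k, x k + ∑ k, w k := by
            rw [← Finset.sum_add_distrib]; rfl
          rw [hax, hsw]; linarith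
      have hmem2 : x - w ∈ D := by
        rw [hDmem]
        refine ⟨fun k => ?_, ?_⟩
        · have hax : (x - w) k = x k - w k := rfl
          rw [hax]
          rcases eq_or_ne k i with rfl | hki
          · rw [hw_i]; constructor <;> linarith
          rcases eq_or_ne k j with rfl | hkj
          · rw [hw_j]; constructor <;> linarith
          · rw [hw_o k hki hkj]
            constructor <;> linarith [(hxb k).1, (hxb k).2]
        · have hax : ∑ k, (x - w) k = ∑ k, x k - ∑ k, w k := by
            rw [← Finset.sum_sub_distrib]; rfl
          rw [hax, hsw]; linarith
      have h0 : w = 0 := extreme_perturb' hx hmem1 hmem2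
      have hcontra : w i = 0 := by rw [h0]; rfl
      rw [hw_i] at hcontra
      exact absurd hcontra (ne_of_gt hε0)
    have htight : ∀ j : Fin d, 0 < x j → x j < 1 → ∑ k, x k = 3 / 2 := by
      intro j hj0 hj1
      by_contra hne
      have hlt : ∑ k, x k < 3 / 2 := lt_of_le_of_ne hxs hne
      set ε : ℝ := min (min (x j) (1 - x j)) (3 / 2 - ∑ k, x k) with hεdef
      have hε1 : ε ≤ x j := le_trans (min_le_left _ _) (min_le_left _ _)
      have hε2 : ε ≤ 1 - x j := le_trans (min_le_left _ _) (min_le_right _ _)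
      have hε3 : ε ≤ 3 / 2 - ∑ k, x k := min_le_right _ _
      have hε0 : 0 < ε := lt_min (lt_min hj0 (by linarith)) (by linarith)
      set w : EuclideanSpace ℝ (Fin d) := ε • EuclideanSpace.single j (1 : ℝ) with hwdef
      have hw_j : w j = ε := by simp [hwdef]
      have hw_o : ∀ k, k ≠ j → w k = 0 := by intro k hk; simp [hwdef, hk]
      have hsw : ∑ k, w k = ε := by
        have hterm : ∀ k, w k = ε * (if k = j then 1 else 0) := by
          intro k; simp [hwdef]
        rw [Finset.sum_congr rfl fun k _ => hterm k]
        simp [mul_ite]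
      have hmem1 : x + w ∈ D := by
        rw [hDmem]
        refine ⟨fun k => ?_, ?_⟩
        · have hax : (x + w) k = x k + w k := rfl
          rw [hax]
          rcases eq_or_ne k j with rfl | hkj
          · rw [hw_j]; constructor <;> linarith
          · rw [hw_o k hkj]
            constructor <;> linarith [(hxb k).1, (hxb k).2]
        · have hax : ∑ k, (x + w) k = ∑ k, x k + ∑ k, w k := by
            rw [← Finset.sum_add_distrib]; rfl
          rw [hax, hsw]; linarith
      have hmem2 : x - w ∈ D := by
        rw [hDmem]
        refine ⟨fun k => ?_, ?_⟩
        · have hax : (x - w) k = x k - w k := rfl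
          rw [hax]
          rcases eq_or_ne k j with rfl | hkj
          · rw [hw_j]; constructor <;> linarith
          · rw [hw_o k hkj]
            constructor <;> linarith [(hxb k).1, (hxb k).2]
        · have hax : ∑ k, (x - w) k = ∑ k, x k - ∑ k, w k := by
            rw [← Finset.sum_sub_distrib]; rfl
          rw [hax, hsw]; linarith
      have h0 : w = 0 := extreme_perturb' hx hmem1 hmem2
      have hcontra : w j = 0 := by rw [h0]; rfl
      rw [hw_j] at hcontra
      exact absurd hcontra (ne_of_gt hε0)
    by_cases hex : ∃ j, 0 < x j ∧ x j < 1
    · obtain ⟨j, hj0, hj1⟩ := hex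
      have hbin : ∀ k, k ≠ j → x k = 0 ∨ x k = 1 := by
        intro k hk
        rcases eq_or_lt_of_le (hxb k).1 with h0 | h0
        · exact Or.inl h0.symm
        rcases eq_or_lt_of_le (hxb k).2 with h1 | h1
        · exact Or.inr h1
        · exact absurd (hfrac k j hk h0 h1 hj0 hj1) not_false
      have hts := htight j hj0 hj1
      have hone : ∃ i, i ≠ j ∧ x i = 1 := by
        by_contra h
        push_neg at h
        have hz : ∀ k, k ≠ j → x k = 0 := fun k hk => (hbin k hk).resolve_right (h k hk)
        have hsx : ∑ k, x k = x j := by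
          rw [← Finset.sum_subset (Finset.subset_univ ({j} : Finset (Fin d)))
            (fun k _ hk => hz k (by simpa using hk))]
          simp
        rw [hsx] at hts; linarith
      obtain ⟨i, hij, hxi⟩ := hone
      have hzero : ∀ k, k ≠ i → k ≠ j → x k = 0 := by
        intro k hki hkj
        rcases hbin k hkj with h0 | h1
        · exact h0
        · exfalso
          have hsub : ∑ m ∈ ({i, k} : Finset (Fin d)), x m ≤ ∑ m, x m :=
            Finset.sum_le_sum_of_subset_of_nonneg (Finset.subset_univ _)
              (fun m _ _ => (hxb m).1)
          rw [Finset.sum_pair (Ne.symm hki)] at hsub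
          rw [hts] at hsub
          linarith
      have hxj : x j = 1 / 2 := by
        have hsx : ∑ k, x k = x i + x j := by
          rw [← Finset.sum_pair hij]
          symm
          apply Finset.sum_subset (Finset.subset_univ _)
          intro k _ hk
          simp only [Finset.mem_insert, Finset.mem_singleton] at hk
          push_neg at hk
          exact hzero k hk.1 hk.2
        rw [hsx] at hts
        linarith
      refine Or.inr (Or.inr ⟨i, j, hij, ?_⟩)
      ext k
      simp only [PiLp.add_apply, PiLp.smul_apply, EuclideanSpace.single_apply, smul_eq_mul]
      rcases eq_or_ne k i with rfl | hki
      · simp [hij, hxi]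
      rcases eq_or_ne k j with rfl | hkj
      · simp [hki, hxj]
      · simp [hki, hkj, hzero k hki hkj]
    · push_neg at hex
      have hbin : ∀ k, x k = 0 ∨ x k = 1 := by
        intro k
        rcases eq_or_lt_of_le (hxb k).1 with h0 | h0
        · exact Or.inl h0.symm
        · exact Or.inr (le_antisymm (hxb k).2 (hex k h0))
      by_cases hone : ∃ i, x i = 1
      · obtain ⟨i, hxi⟩ := hone
        have hz : ∀ k, k ≠ i → x k = 0 := by
          intro k hk
          rcases hbin k with h0 | h1
          · exact h0
          · exfalso
            have hsub : ∑ m ∈ ({i, k} : Finset (Fin d)), x m ≤ ∑ m, x m :=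
              Finset.sum_le_sum_of_subset_of_nonneg (Finset.subset_univ _)
                (fun m _ _ => (hxb m).1)
            rw [Finset.sum_pair (Ne.symm hk)] at hsub
            linarith
        refine Or.inr (Or.inl ⟨i, ?_⟩)
        ext k
        rcases eq_or_ne k i with rfl | hk
        · simp [hxi]
        · simp [hz k hk, hk]
      · push_neg at hone
        have hz : ∀ k, x k = 0 := fun k => (hbin k).resolve_right (hone k)
        exact Or.inl (by ext k; simp [hz k])
  -- the set equality
  have hset : Set.extremePoints ℝ D =
      ({0} ∪ {x | ∃ i : Fin d, x = EuclideanSpace.single i (1 : ℝ)} ∪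
        {x | ∃ i j : Fin d, i ≠ j ∧
          x = EuclideanSpace.single i (1 : ℝ) +
            (1 / 2 : ℝ) • EuclideanSpace.single j (1 : ℝ)}) := by
    apply Set.Subset.antisymm
    · intro x hx
      simp only [Set.mem_union, Set.mem_singleton_iff, Set.mem_setOf_eq]
      rcases hforward x hx with h | h | h
      · exact Or.inl (Or.inl h)
      · exact Or.inl (Or.inr h)
      · exact Or.inr h
    · intro x hx
      simp only [Set.mem_union, Set.mem_singleton_iff, Set.mem_setOf_eq] at hx
      rcases hx with (rfl | ⟨i, rfl⟩) | ⟨i, j, hij, rfl⟩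
      · exact h0ext
      · exact hfext i
      · exact hgext i j hij
  refine ⟨hset, ?_⟩
  rw [hset]
  -- cardinality
  set S2 : Set (EuclideanSpace ℝ (Fin d)) :=
    {x | ∃ i : Fin d, x = EuclideanSpace.single i (1 : ℝ)} with hS2def
  set S3 : Set (EuclideanSpace ℝ (Fin d)) :=
    {x | ∃ i j : Fin d, i ≠ j ∧ x = EuclideanSpace.single i (1 : ℝ) +
      (1 / 2 : ℝ) • EuclideanSpace.single j (1 : ℝ)} with hS3def
  have hS2r : S2 = Set.range (fun i : Fin d => EuclideanSpace.single i (1 : ℝ)) := by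
    ext v
    simp only [hS2def, Set.mem_setOf_eq, Set.mem_range, eq_comm]
  have hfinj : Function.Injective (fun i : Fin d => EuclideanSpace.single i (1 : ℝ)) := by
    intro i j h
    have h1 := congrArg (· i) h
    simp only [EuclideanSpace.single_apply, if_pos rfl] at h1
    by_contra hne
    rw [if_neg hne] at h1
    norm_num at h1
  have hS3r : S3 = (fun p : Fin d × Fin d => EuclideanSpace.single p.1 (1 : ℝ) +
      (1 / 2 : ℝ) • EuclideanSpace.single p.2 (1 : ℝ)) '' {p | p.1 ≠ p.2} := by
    ext v
    simp only [hS3def, Set.mem_setOf_eq, Set.mem_image, Prod.exists]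
    constructor
    · rintro ⟨i, j, hij, rfl⟩; exact ⟨i, j, hij, rfl⟩
    · rintro ⟨i, j, hij, rfl⟩; exact ⟨i, j, hij, rfl⟩
  have hginj : Set.InjOn (fun p : Fin d × Fin d => EuclideanSpace.single p.1 (1 : ℝ) +
      (1 / 2 : ℝ) • EuclideanSpace.single p.2 (1 : ℝ)) {p | p.1 ≠ p.2} := by
    rintro ⟨i, j⟩ hij ⟨k, l⟩ hkl h
    simp only [Set.mem_setOf_eq] at hij hkl
    have h1 := congrArg (· i) h
    have h2 := congrArg (· j) h
    simp only [PiLp.add_apply, PiLp.smul_apply, EuclideanSpace.single_apply, smul_eq_mul] at h1 h2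
    have hik : i = k := by
      by_contra hne
      rcases eq_or_ne i l with rfl | hne2
      · simp [hij, hne] at h1
      · simp [hij, hne, hne2] at h1
    have hjl : j = l := by
      by_contra hne
      rcases eq_or_ne j k with rfl | hne2
      · simp [Ne.symm hij, hne] at h2
      · simp [Ne.symm hij, hne, hne2] at h2
    simp [Prod.ext_iff, hik, hjl]
  have hfin2 : S2.Finite := by rw [hS2r]; exact Set.finite_range _
  have hfin3 : S3.Finite := by rw [hS3r]; exact (Set.toFinite _).image _
  have hd1 : Disjoint ({0} : Set (EuclideanSpace ℝ (Fin d))) S2 := by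
    rw [Set.disjoint_left]
    rintro v rfl ⟨i, hv⟩
    have := congrArg (· i) hv
    simp at this
  have hd2 : Disjoint (({0} : Set (EuclideanSpace ℝ (Fin d))) ∪ S2) S3 := by
    rw [Set.disjoint_left]
    rintro v hv ⟨i, j, hij, hv3⟩
    rcases hv with rfl | ⟨m, rfl⟩
    · have := congrArg (· i) hv3
      simp [hij] at this
    · have hc := congrArg (· j) hv3
      simp only [PiLp.add_apply, PiLp.smul_apply, EuclideanSpace.single_apply,
        smul_eq_mul] at hc
      rw [if_neg (Ne.symm hij)] at hc
      rcases eq_or_ne j m with rfl | hne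
      · norm_num at hc
      · norm_num [hne] at hc
  rw [Set.ncard_union_eq hd2 ((Set.finite_singleton 0).union hfin2) hfin3,
    Set.ncard_union_eq hd1 (Set.finite_singleton 0) hfin2, Set.ncard_singleton]
  have hc2 : S2.ncard = d := by
    rw [hS2r, ← Set.image_univ, Set.ncard_image_of_injective _ hfinj, Set.ncard_univ,
      Nat.card_eq_fintype_card, Fintype.card_fin]
  have hc3 : S3.ncard = d * d - d := by
    have hO : {p : Fin d × Fin d | p.1 ≠ p.2}
        = ↑(Finset.univ.offDiag : Finset (Fin d × Fin d)) := by
      ext p; simp [Finset.mem_offDiag]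
    rw [hS3r, Set.ncard_image_of_injOn hginj, hO, Set.ncard_coe_finset,
      Finset.offDiag_card, Finset.card_univ, Fintype.card_fin]
  rw [hc2, hc3]
  have hle : d ≤ d * d := Nat.le_mul_of_pos_left d (by omega)
  have hcancel : d + (d * d - d) = d * d := Nat.add_sub_cancel' hle
  calc 1 + d + (d * d - d) = 1 + (d + (d * d - d)) := Nat.add_assoc 1 d _
    _ = 1 + d * d := by rw [hcancel]
    _ = d ^ 2 + 1 := by rw [pow_two, Nat.add_comm]
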